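/- arXiv:2302.04020 — 3 statements merged into one kernel-verified Lean document; each statement's English description precedes it below -/
import Mathlib

section
/- With the seed mutation μ_k(e_i) = e_i + [ε_{ki}]_+ e_k (i ≠ k), μ_k(e_k) = -e_k, and f_i = d_i^{-1}e_i^* the rescaled dual basis, the mutated dual vectors satisfy μ_k(f_i) = f_i for i ≠ k and μ_k(f_k) = -f_k + Σ_j [-ε_{jk}]_+ f_j, where μ_k(f_i) := d_i^{-1} μ_k(e_i)^* is the rescaled dual basis of the mutated basis. -/
/-- Mutation of the rescaled dual basis vectors `f_i = d_i⁻¹ e_i^*`: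
`μ_k(f_i) = f_i` for `i ≠ k` and `μ_k(f_k) = -f_k + Σ_j [-ε_{jk}]_+ f_j`. -/
theorem stmt4 {V ι : Type*} [AddCommGroup V] [Module ℚ V] [Fintype ι] [DecidableEq ι]
    (b : Module.Basis ι ℚ V)
    (B : V →ₗ[ℚ] V →ₗ[ℚ] ℚ) (hskew : ∀ x y, B x y = -B y x)
    (d : ι → ℚ) (hd : ∀ i, 0 < d i)
    (ε : ι → ι → ℚ) (hε : ∀ i j, ε i j = d i * B (b i) (b j))
    (k : ι)
    (b' : Module.Basis ι ℚ V)
    (hb' : ∀ i, b' i = if i = k then -b k else b i + (max 0 (ε k i)) • b k) :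
    (∀ i, i ≠ k → (d i)⁻¹ • b'.coord i = (d i)⁻¹ • b.coord i) ∧
    (d k)⁻¹ • b'.coord k =
      -((d k)⁻¹ • b.coord k) + ∑ j, (max 0 (-(ε j k))) • ((d j)⁻¹ • b.coord j) := by
  have hεkk : ε k k = 0 := by
    have h := hskew (b k) (b k)
    have hB : B (b k) (b k) = 0 := by linarith
    rw [hε, hB, mul_zero]
  constructor
  · intro i hik
    apply b'.ext
    intro j
    simp only [LinearMap.smul_apply, Module.Basis.coord_apply, Module.Basis.repr_self, smul_eq_mul]
    rw [hb' j]
    by_cases hjk : j = k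
    · subst hjk
      simp [Finsupp.single_apply, Ne.symm hik, hik]
    · simp [if_neg hjk, Finsupp.single_apply, Ne.symm hik]
  · apply b'.ext
    intro j
    simp only [LinearMap.add_apply, LinearMap.neg_apply, LinearMap.smul_apply,
      LinearMap.sum_apply, Module.Basis.coord_apply, Module.Basis.repr_self, smul_eq_mul]
    rw [hb' j]
    by_cases hjk : j = k
    · subst hjk
      simp only [if_pos rfl, map_neg, Module.Basis.repr_self, Finsupp.coe_neg, Pi.neg_apply,
        Finsupp.single_apply, if_pos rfl]
      rw [Finset.sum_eq_single j]
      · simp [hεkk]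
      · intro x _ hx
        simp [Finsupp.single_apply, Ne.symm hx]
      · simp
    · have hkey : max 0 (-ε j k) * (d j)⁻¹ = max 0 (ε k j) * (d k)⁻¹ := by
        have hc : (0:ℚ) ≤ d j * (d k)⁻¹ := le_of_lt (mul_pos (hd j) (inv_pos.2 (hd k)))
        have h3 : -ε j k = d j * (d k)⁻¹ * ε k j := by
          rw [hε j k, hε k j]
          have hs := hskew (b j) (b k)
          rw [hs]
          field_simp
          rw [mul_div_cancel_right₀ _ (hd k).ne']
        rw [h3, show max (0:ℚ) (d j * (d k)⁻¹ * ε k j) = d j * (d k)⁻¹ * max 0 (ε k j) from by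
          rw [mul_max_of_nonneg _ _ hc, mul_zero]]
        rw [show d j * (d k)⁻¹ * (0 ⊔ ε k j) * (d j)⁻¹ =
          (0 ⊔ ε k j) * (d k)⁻¹ * (d j * (d j)⁻¹) from by ring,
          mul_inv_cancel₀ (hd j).ne', mul_one]
      simp only [if_neg hjk, map_add, map_smul, Module.Basis.repr_self, Finsupp.coe_add,
        Finsupp.coe_smul, Pi.add_apply, Pi.smul_apply, smul_eq_mul, Finsupp.single_apply,
        if_neg hjk, mul_add]
      rw [Finset.sum_add_distrib]
      have h1 : ∑ x : ι, max 0 (-ε x k) * ((d x)⁻¹ * (if j = x then (1:ℚ) else 0)) =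
          max 0 (-ε j k) * (d j)⁻¹ := by
        rw [Finset.sum_eq_single j]
        · simp
        · intro x _ hx
          simp [Ne.symm hx]
        · simp
      have h2 : ∑ x : ι, max 0 (-ε x k) *
          ((d x)⁻¹ * (max 0 (ε k j) * if k = x then (1:ℚ) else 0)) = 0 := by
        rw [Finset.sum_eq_single k]
        · simp [hεkk]
        · intro x _ hx
          simp [Ne.symm hx]
        · simp
      rw [h1, h2, hkey]
      simp
      ring
end

section
/- The exchange matrix transforms under seed mutation by the standard rule: if ε_{ij} = d_i{e_i,e_j} and e_i' = μ_k(e_i) as defined by e_i' = e_i + [ε_{ki}]_+ e_k (i ≠ k), e_k' = -e_k, then ε'_{ij} := d_i{e_i', e_j'} satisfies ε'_{ij} = -ε_{ij} if k ∈ {i,j}, and ε'_{ij} = ε_{ij} + ε_{ik}[ε_{kj}]_+ + [-ε_{ik}]_+ε_{kj} otherwise. -/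
/-- The exchange matrix `ε_{ij} = d_i {e_i, e_j}` transforms under seed mutation
`e_i' = e_i + [ε_{ki}]_+ e_k (i ≠ k)`, `e_k' = -e_k` by the standard matrix mutation rule. -/
theorem stmt5 {V ι : Type*} [AddCommGroup V] [Module ℚ V] [DecidableEq ι]
    (b : Module.Basis ι ℚ V)
    (B : V →ₗ[ℚ] V →ₗ[ℚ] ℚ) (hskew : ∀ x y, B x y = -B y x)
    (d : ι → ℚ) (hd : ∀ i, 0 < d i)
    (ε : ι → ι → ℚ) (hε : ∀ i j, ε i j = d i * B (b i) (b j))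
    (k : ι)
    (e' : ι → V)
    (he' : ∀ i, e' i = if i = k then -b k else b i + (max 0 (ε k i)) • b k) :
    ∀ i j, d i * B (e' i) (e' j) =
      if i = k ∨ j = k then -(ε i j)
      else ε i j + ε i k * max 0 (ε k j) + max 0 (-(ε i k)) * ε k j := by
  have hBzero : ∀ x : V, B x x = 0 := fun x => by have := hskew x x; linarith
  intro i j
  by_cases hi : i = k <;> by_cases hj : j = k
  · subst hi; subst hj
    simp only [he', if_pos rfl, or_self, if_pos]
    simp [hBzero, hε]
  · subst hi
    simp only [he', if_pos rfl, if_neg hj, true_or, if_pos]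
    simp only [map_neg, map_add, map_smul, LinearMap.neg_apply, LinearMap.add_apply,
      LinearMap.smul_apply, hBzero, smul_eq_mul, hε]
    ring
  · subst hj
    simp only [he', if_pos rfl, if_neg hi, or_true, if_pos]
    simp only [map_neg, map_add, map_smul, LinearMap.neg_apply, LinearMap.add_apply,
      LinearMap.smul_apply, smul_eq_mul]
    simp only [hBzero, hε]
    ring
  · have h1 : max 0 (ε k i) * d i = max 0 (-(ε i k)) * d k := by
      have h2 : ε k i * d i = -(ε i k) * d k := by
        rw [hε, hε, hskew (b i) (b k)]; ring
      rw [max_mul_of_nonneg _ _ (le_of_lt (hd i)), max_mul_of_nonneg _ _ (le_of_lt (hd k)),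
        zero_mul, zero_mul, h2]
    have key : max 0 (ε k i) * (d i * B (b k) (b j)) = max 0 (-(ε i k)) * ε k j := by
      rw [hε k j, show max 0 (ε k i) * (d i * B (b k) (b j)) =
        (max 0 (ε k i) * d i) * B (b k) (b j) by ring, h1]
      ring
    rw [if_neg (by tauto)]
    simp only [he', if_neg hi, if_neg hj]
    simp only [map_add, map_smul, LinearMap.add_apply, LinearMap.smul_apply, smul_eq_mul]
    rw [hBzero]
    have expand : d i * (B (b i) (b j) + max 0 (ε k i) * B (b k) (b j) +
        max 0 (ε k j) * (B (b i) (b k) + max 0 (ε k i) * 0)) =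
        ε i j + ε i k * max 0 (ε k j) + max 0 (ε k i) * (d i * B (b k) (b j)) := by
      rw [hε i j, hε i k]; ring
    rw [expand, key]
end

section
/- Assuming sign coherence of c-vectors (for each t and j, the entries c_{ij;t} over i all have the same sign), the following holds: if v = Σ_{i frozen} a_i e_i with all a_i ≥ 0 in an initial seed, then for every t in the mutation tree the tropical degree Σ_i a_i c_{li;t} of the mutated monomial μ_t^*(z^v) in a variable X_l is nonnegative for every l. Consequently, if μ_t^*(z^v) is a Laurent polynomial in the cluster variables of seed s_t, it is in fact a polynomial. -/
/-- Matrix mutation in direction `k`. -/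
def mutMat {ι : Type*} [DecidableEq ι] (M : Matrix ι ι ℤ) (k : ι) : Matrix ι ι ℤ :=
  fun i j => if i = k ∨ j = k then -M i j
    else M i j + M i k * max 0 (M k j) + max 0 (-(M i k)) * M k j

/-- One mutation step of the pair (exchange matrix, C-matrix) at direction `k`. -/
def cStep {n : ℕ} (p : Matrix (Fin n) (Fin n) ℤ × Matrix (Fin n) (Fin n) ℤ) (k : Fin n) :
    Matrix (Fin n) (Fin n) ℤ × Matrix (Fin n) (Fin n) ℤ :=
  (mutMat p.1 k,
   fun i j => if j = k then -p.2 i k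
     else p.2 i j + p.2 i k * max 0 (p.1 k j) + max 0 (-(p.2 i k)) * p.1 k j)

/-- Assuming sign coherence of c-vectors and that `c_{ii;t} = 1` for frozen `i`, a monomial
`z^v` with `v = Σ_{i frozen} a_i e_i`, `a_i ≥ 0`, has nonnegative tropical degree
`Σ_i a_i c_{li;t} ≥ 0` in every variable `X_l` and every seed `s_t` reached by mutations at
unfrozen indices (hence a universally Laurent `μ_t^*(z^v)` is universally polynomial). -/
theorem stmt10 {n : ℕ} (ε : Matrix (Fin n) (Fin n) ℤ)
    (uf : Fin n → Prop)
    (cmat : List (Fin n) → Matrix (Fin n) (Fin n) ℤ)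
    (hcmat : ∀ L, cmat L = (L.foldl cStep (ε, 1)).2)
    (hsc : ∀ L, (∀ k ∈ L, uf k) → ∀ j, (∀ i, 0 ≤ cmat L i j) ∨ (∀ i, cmat L i j ≤ 0))
    (hfr : ∀ L, (∀ k ∈ L, uf k) → ∀ i, ¬ uf i → cmat L i i = 1)
    (a : Fin n → ℤ) (ha : ∀ i, 0 ≤ a i) (hsupp : ∀ i, uf i → a i = 0) :
    ∀ L, (∀ k ∈ L, uf k) → ∀ l, 0 ≤ ∑ i, a i * cmat L l i := by
  intro L hL l
  apply Finset.sum_nonneg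
  intro i _
  by_cases hi : uf i
  · simp [hsupp i hi]
  · have h1 := hfr L hL i hi
    rcases hsc L hL i with h | h
    · exact mul_nonneg (ha i) (h l)
    · have := h i; omega
end
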